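/- arXiv:2509.19887 — 3 statements merged into one kernel-verified Lean document; each statement's English description precedes it below -/
import Mathlib

section
/- Let L be an n×n complex matrix, η : ℂⁿ → ℂ, θ, γ : ℂⁿ → ℝ arbitrary functions, and define a(ψ) = -iHψ - ½ L†Lψ + (-½|η(ψ)|² + iγ(ψ))ψ - e^{iθ(ψ)} η(ψ)* Lψ and b(ψ) = η(ψ)ψ + e^{iθ(ψ)} Lψ. Then for every unit vector ψ, a(ψ)ψ† + ψ a(ψ)† + b(ψ)b(ψ)† = -i[H, ψψ†] + Lψψ†L† - ½ L†L ψψ† - ½ ψψ† L†L. -/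
open Matrix Complex

/-- Outer product `ψ φ†`. -/
noncomputable def outer {n : ℕ} (v w : Fin n → ℂ) : Matrix (Fin n) (Fin n) ℂ :=
  Matrix.vecMulVec v (star w)

/-- Hermitian inner product, conjugate-linear in the first slot. -/
noncomputable def inn {n : ℕ} (v w : Fin n → ℂ) : ℂ := star v ⬝ᵥ w

section aux

variable {n : ℕ}

lemma outer_add_left (u v w : Fin n → ℂ) : outer (u + v) w = outer u w + outer v w := by
  ext i j; simp [outer, Matrix.vecMulVec_apply, add_mul]

lemma outer_sub_left (u v w : Fin n → ℂ) : outer (u - v) w = outer u w - outer v w := by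
  ext i j; simp [outer, Matrix.vecMulVec_apply, sub_mul]

lemma outer_add_right (u v w : Fin n → ℂ) : outer u (v + w) = outer u v + outer u w := by
  ext i j; simp [outer, Matrix.vecMulVec_apply, mul_add]

lemma outer_sub_right (u v w : Fin n → ℂ) : outer u (v - w) = outer u v - outer u w := by
  ext i j; simp [outer, Matrix.vecMulVec_apply, mul_sub]

lemma outer_smul_left (c : ℂ) (v w : Fin n → ℂ) : outer (c • v) w = c • outer v w := by
  ext i j; simp [outer, Matrix.vecMulVec_apply, mul_assoc]

lemma outer_smul_right (c : ℂ) (v w : Fin n → ℂ) :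
    outer v (c • w) = (starRingEnd ℂ) c • outer v w := by
  ext i j; simp [outer, Matrix.vecMulVec_apply]; ring

lemma outer_mulVec_left (A : Matrix (Fin n) (Fin n) ℂ) (v w : Fin n → ℂ) :
    outer (A.mulVec v) w = A * outer v w := by
  ext i j
  simp [outer, Matrix.vecMulVec_apply, Matrix.mul_apply, Matrix.mulVec, dotProduct,
    Finset.sum_mul, mul_assoc]

lemma outer_mulVec_right (A : Matrix (Fin n) (Fin n) ℂ) (v w : Fin n → ℂ) :
    outer v (A.mulVec w) = outer v w * Aᴴ := by
  ext i j
  simp only [outer, Matrix.vecMulVec_apply, Matrix.mul_apply, Matrix.mulVec,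
    dotProduct, Pi.star_apply, Matrix.conjTranspose_apply, map_sum, _root_.map_mul,
    Finset.mul_sum, RCLike.star_def]
  refine Finset.sum_congr rfl fun k _ => by ring

end aux

/-- For the general parametric family
`a(ψ) = -iHψ - ½L†Lψ + (-½|η(ψ)|² + iγ(ψ))ψ - e^{iθ(ψ)} η(ψ)^* Lψ`,
`b(ψ) = η(ψ)ψ + e^{iθ(ψ)} Lψ`, the unraveling identity holds for unit vectors. -/
theorem stmt2 (n : ℕ) (H L : Matrix (Fin n) (Fin n) ℂ) (hH : H.IsHermitian)
    (η : (Fin n → ℂ) → ℂ) (θ γ : (Fin n → ℂ) → ℝ)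
    (a b : (Fin n → ℂ) → (Fin n → ℂ))
    (ha : ∀ ψ, a ψ = (-Complex.I) • H.mulVec ψ - (1/2 : ℂ) • (Lᴴ * L).mulVec ψ
      + ((-(1/2 : ℂ)) * (‖η ψ‖)^2 + Complex.I * (γ ψ)) • ψ
      - (Complex.exp (Complex.I * (θ ψ)) * (starRingEnd ℂ) (η ψ)) • L.mulVec ψ)
    (hb : ∀ ψ, b ψ = η ψ • ψ + Complex.exp (Complex.I * (θ ψ)) • L.mulVec ψ) :
    ∀ ψ : Fin n → ℂ, inn ψ ψ = 1 →
      outer (a ψ) ψ + outer ψ (a ψ) + outer (b ψ) (b ψ)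
        = (-Complex.I) • (H * outer ψ ψ - outer ψ ψ * H)
          + L * outer ψ ψ * Lᴴ
          - (1/2 : ℂ) • (Lᴴ * L * outer ψ ψ)
          - (1/2 : ℂ) • (outer ψ ψ * (Lᴴ * L)) := by
  intro ψ hψ
  have hexp : Complex.exp (Complex.I * (θ ψ)) *
      (starRingEnd ℂ) (Complex.exp (Complex.I * (θ ψ))) = 1 := by
    rw [← Complex.exp_conj, ← Complex.exp_add]
    simp [Complex.conj_I, mul_comm]
  have habs : ((‖η ψ‖ : ℂ))^2 = η ψ * (starRingEnd ℂ) (η ψ) := by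
    rw [Complex.mul_conj]
    norm_cast
    exact Complex.sq_norm _
  rw [ha, hb]
  simp only [outer_add_left, outer_add_right, outer_sub_left, outer_sub_right,
    outer_smul_left, outer_smul_right, outer_mulVec_left, outer_mulVec_right,
    map_add, map_sub, _root_.map_mul, map_neg, _root_.map_one, map_ofNat, map_div₀,
    Complex.conj_I, Complex.conj_ofReal, Matrix.conjTranspose_mul,
    Matrix.conjTranspose_conjTranspose, hH.eq, Matrix.mul_assoc, Matrix.mul_sub,
    Matrix.sub_mul, Matrix.mul_add, Matrix.add_mul, Matrix.mul_smul, Matrix.smul_mul]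
  match_scalars <;>
    (try simp only [_root_.map_mul, map_pow, map_add, map_neg, _root_.map_one, map_div₀,
        map_ofNat, Complex.conj_I, Complex.conj_ofReal, Complex.conj_conj]) <;>
    (first
        | ring1
        | linear_combination habs
        | linear_combination -habs
        | linear_combination hexp)
end

section
/- Suppose ψ ∈ ℂⁿ is a unit vector that is not an eigenvector of the matrix L, and suppose A, B ∈ ℂⁿ satisfy Aψ† + ψA† + B(Lψ)† + (Lψ)B† + BB† = 0 (as n×n matrices). Then there exist β₁ ∈ ℂ and θ ∈ ℝ with Re(β₁) determined such that B = β₁ ψ + (e^{iθ} - 1)(Lψ - ⟨ψ,Lψ⟩ψ); in particular, B lies in the span of ψ and Lψ. -/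
open Matrix Complex

lemma inn_conj {n : ℕ} (u v : Fin n → ℂ) : inn u v = star (inn v u) := by
  simp [inn, dotProduct, mul_comm]

lemma inn_add_right {n : ℕ} (u v w : Fin n → ℂ) : inn u (v + w) = inn u v + inn u w :=
  dotProduct_add _ _ _

lemma inn_sub_right {n : ℕ} (u v w : Fin n → ℂ) : inn u (v - w) = inn u v - inn u w := by
  simp [inn, dotProduct, Finset.sum_sub_distrib, mul_sub]

lemma inn_smul_right {n : ℕ} (s : ℂ) (u v : Fin n → ℂ) : inn u (s • v) = s * inn u v := by
  simp [inn, dotProduct, Finset.mul_sum, mul_left_comm]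

lemma inn_add_left {n : ℕ} (u v w : Fin n → ℂ) : inn (u + v) w = inn u w + inn v w := by
  simp [inn, dotProduct, Finset.sum_add_distrib, add_mul]

lemma inn_smul_left {n : ℕ} (s : ℂ) (u v : Fin n → ℂ) : inn (s • u) v = star s * inn u v := by
  simp [inn, dotProduct, Finset.mul_sum, mul_assoc]

open scoped ComplexOrder in
lemma inn_self_eq_zero {n : ℕ} {v : Fin n → ℂ} : inn v v = 0 ↔ v = 0 :=
  dotProduct_star_self_eq_zero

lemma outer_dot {n : ℕ} (u a b v : Fin n → ℂ) :
    star u ⬝ᵥ (outer a b).mulVec v = inn u a * inn b v := by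
  simp only [outer, inn, Matrix.mulVec, dotProduct, Matrix.vecMulVec_apply, Finset.mul_sum,
    Finset.sum_mul, Pi.star_apply]
  rw [Finset.sum_comm]
  apply Finset.sum_congr rfl; intro j _
  apply Finset.sum_congr rfl; intro i _
  ring

/-- If `ψ` is a unit vector which is not an eigenvector of `L` and
`Aψ† + ψA† + B(Lψ)† + (Lψ)B† + BB† = 0`, then
`B = β₁ ψ + (e^{iθ} - 1)(Lψ - ⟨ψ,Lψ⟩ψ)` for some `β₁ ∈ ℂ`, `θ ∈ ℝ`;
in particular `B ∈ span{ψ, Lψ}`. -/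
theorem stmt4 (n : ℕ) (L : Matrix (Fin n) (Fin n) ℂ) (ψ A B : Fin n → ℂ)
    (hψ : inn ψ ψ = 1) (heig : ∀ c : ℂ, L.mulVec ψ ≠ c • ψ)
    (hrel : outer A ψ + outer ψ A + outer B (L.mulVec ψ) + outer (L.mulVec ψ) B
      + outer B B = 0) :
    (∃ (β₁ : ℂ) (θ : ℝ),
        B = β₁ • ψ + (Complex.exp (Complex.I * θ) - 1)
          • (L.mulVec ψ - inn ψ (L.mulVec ψ) • ψ)) ∧
      B ∈ Submodule.span ℂ ({ψ, L.mulVec ψ} : Set (Fin n → ℂ)) := by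
  set Lψ := L.mulVec ψ with hLψ
  have key : ∀ u v : Fin n → ℂ,
      inn u A * inn ψ v + inn u ψ * inn A v + inn u B * inn Lψ v
        + inn u Lψ * inn B v + inn u B * inn B v = 0 := by
    intro u v
    have h := congrArg (fun M : Matrix (Fin n) (Fin n) ℂ => star u ⬝ᵥ M.mulVec v) hrel
    simpa only [Matrix.add_mulVec, Matrix.zero_mulVec, dotProduct_add, dotProduct_zero,
      outer_dot] using h
  set s := inn ψ Lψ with hs
  set φ := Lψ - s • ψ with hφ
  have hψφ : inn ψ φ = 0 := by
    rw [hφ, inn_sub_right, inn_smul_right, ← hs, hψ, mul_one, sub_self]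
  have hφψ : inn φ ψ = 0 := by rw [inn_conj, hψφ, star_zero]
  have hLφ : Lψ = φ + s • ψ := by rw [hφ]; abel
  have hφ0 : φ ≠ 0 := by
    intro h
    exact heig s (by rwa [hφ, sub_eq_zero] at h)
  set r := inn φ φ with hr
  have hr0 : r ≠ 0 := fun h => hφ0 (inn_self_eq_zero.mp h)
  have hrstar : star r = r := by rw [hr]; conv_lhs => rw [inn_conj, star_star]
  set b := inn ψ B with hb
  set c := inn φ B / r with hc
  set w := B - b • ψ - c • φ with hw
  have hBw : B = b • ψ + c • φ + w := by rw [hw]; abel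
  have hψw : inn ψ w = 0 := by
    rw [hw, inn_sub_right, inn_sub_right, inn_smul_right, inn_smul_right, ← hb, hψ, hψφ]
    ring
  have hφw : inn φ w = 0 := by
    rw [hw, inn_sub_right, inn_sub_right, inn_smul_right, inn_smul_right, hφψ, ← hr, hc,
      div_mul_cancel₀ _ hr0]
    ring
  have hwψ : inn w ψ = 0 := by rw [inn_conj, hψw, star_zero]
  have hwφ : inn w φ = 0 := by rw [inn_conj, hφw, star_zero]
  -- show w = 0
  have hLw : inn Lψ w = 0 := by
    rw [inn_conj, hLφ, inn_add_right, inn_smul_right, hwφ, hwψ]; simp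
  have hwL : inn w Lψ = 0 := by rw [inn_conj, hLw, star_zero]
  have hBww : inn B w = inn w w := by
    rw [inn_conj, hBw, inn_add_right, inn_add_right, inn_smul_right, inn_smul_right,
      hwψ, hwφ]
    simp only [mul_zero, zero_add, star_add, star_mul', star_zero, mul_zero, add_zero,
      zero_add]
    rw [← inn_conj]
  have hwB : inn w B = inn w w := by
    rw [inn_conj, hBww, inn_conj, star_star, ← inn_conj]
  have hww : inn w w = 0 := by
    have h := key w w
    rw [hψw, hwψ, hLw, hwL, hwB, hBww] at h
    have h2 : inn w w * inn w w = 0 := by linear_combination h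
    exact (mul_self_eq_zero).mp h2
  have hw0 : w = 0 := inn_self_eq_zero.mp hww
  have hB : B = b • ψ + c • φ := by rw [hBw, hw0, add_zero]
  -- key relation at φ, φ
  have hφB : inn φ B = c * r := by
    rw [hB, inn_add_right, inn_smul_right, inn_smul_right, hφψ, ← hr]; ring
  have hBφ : inn B φ = star c * r := by
    rw [inn_conj, hφB, star_mul', hrstar, mul_comm]
  have hLφ2 : inn Lψ φ = r := by
    rw [hLφ, inn_add_left, inn_smul_left, hψφ, ← hr]; ring
  have hφL : inn φ Lψ = r := by
    rw [hLφ, inn_add_right, inn_smul_right, hφψ, ← hr]; ring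
  have hcc : c + star c + c * star c = 0 := by
    have h := key φ φ
    rw [hψφ, hφψ, hφB, hBφ, hLφ2, hφL] at h
    have h3 : r * r * (c + star c + c * star c) = 0 := by linear_combination h
    rcases mul_eq_zero.mp h3 with h4 | h4
    · exact absurd (mul_self_eq_zero.mp h4) hr0
    · exact h4
  set z := 1 + c with hz
  have hzs : star z = 1 + star c := by rw [hz, star_add, star_one]
  have hz1 : z * star z = 1 := by rw [hz, hzs]; linear_combination hcc
  have habs : ‖z‖ = 1 := by
    have hns : Complex.normSq z = 1 := by
      have : (Complex.normSq z : ℂ) = 1 := by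
        rw [← Complex.mul_conj]; exact hz1
      exact_mod_cast this
    rw [Complex.norm_def, hns, Real.sqrt_one]
  have hexp : Complex.exp (Complex.I * (Complex.arg z : ℂ)) = z := by
    rw [mul_comm]
    have := Complex.norm_mul_exp_arg_mul_I z
    rwa [habs, Complex.ofReal_one, one_mul] at this
  have hzc : Complex.exp (Complex.I * (Complex.arg z : ℂ)) - 1 = c := by
    rw [hexp, hz]; ring
  constructor
  · exact ⟨b, Complex.arg z, by rw [hB, hzc]⟩
  · apply Submodule.mem_span_pair.mpr
    refine ⟨b - c * s, c, ?_⟩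
    rw [hB, hφ, smul_sub, smul_smul, sub_smul]
    abel
end

section
/- Let O₁,…,O_m be Hermitian matrices, L a matrix, ψ a unit vector, and for each j write ⟨O_jψ, Lψ⟩ - ⟨ψ,Lψ⟩⟨ψ,O_jψ⟩ = R_j e^{iP_j} with R_j ≥ 0. Then min over θ ∈ ℝ of Σ_j |Re(e^{iθ}(⟨O_jψ,Lψ⟩ - ⟨ψ,Lψ⟩⟨ψ,O_jψ⟩))|² equals ½ Σ_j R_j² - ½ |Σ_j R_j² e^{2iP_j}|, attained when e^{2iθ} Σ_j R_j² e^{2iP_j} = -|Σ_j R_j² e^{2iP_j}|. -/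
open Matrix Complex BigOperators

lemma pt19 (θ p r : ℝ) :
    |(Complex.exp (Complex.I * θ) * ((r : ℂ) * Complex.exp (Complex.I * p))).re| ^ 2
      = (1/2) * r ^ 2
        + (1/2) * (Complex.exp (2 * Complex.I * θ)
            * ((r : ℂ) ^ 2 * Complex.exp (2 * Complex.I * p))).re := by
  have h1 : Complex.exp (Complex.I * θ) * ((r : ℂ) * Complex.exp (Complex.I * p))
      = (r : ℂ) * Complex.exp (((θ + p : ℝ) : ℂ) * Complex.I) := by
    rw [mul_left_comm, ← Complex.exp_add]
    congr 1
    push_cast; ring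
  have h2 : Complex.exp (2 * Complex.I * θ) * ((r : ℂ) ^ 2 * Complex.exp (2 * Complex.I * p))
      = (r : ℂ) ^ 2 * Complex.exp (((2 * (θ + p) : ℝ) : ℂ) * Complex.I) := by
    rw [mul_left_comm, ← Complex.exp_add]
    congr 1
    push_cast; ring
  rw [h1, h2]
  have e1 : ((r : ℂ) * Complex.exp (((θ + p : ℝ) : ℂ) * Complex.I)).re
      = r * Real.cos (θ + p) := by
    rw [Complex.mul_re, Complex.ofReal_re, Complex.ofReal_im, Complex.exp_ofReal_mul_I_re]
    ring
  have e2 : ((r : ℂ) ^ 2 * Complex.exp (((2 * (θ + p) : ℝ) : ℂ) * Complex.I)).re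
      = r ^ 2 * Real.cos (2 * (θ + p)) := by
    have : ((r : ℂ) ^ 2) = ((r ^ 2 : ℝ) : ℂ) := by push_cast; ring
    rw [this, Complex.mul_re, Complex.ofReal_re, Complex.ofReal_im,
      Complex.exp_ofReal_mul_I_re]
    ring
  rw [e1, e2, _root_.sq_abs, Real.cos_two_mul]
  ring

/-- Multi-observable DO-QSD optimal phase: with
`z_j = ⟨O_jψ,Lψ⟩ - ⟨ψ,Lψ⟩⟨ψ,O_jψ⟩ = R_j e^{iP_j}` (`R_j ≥ 0`), the minimum over
`θ ∈ ℝ` of `Σ_j |Re(e^{iθ} z_j)|²` equals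
`½ Σ_j R_j² - ½ |Σ_j R_j² e^{2iP_j}|`, attained exactly when
`e^{2iθ} Σ_j R_j² e^{2iP_j} = -|Σ_j R_j² e^{2iP_j}|`. -/
theorem stmt19 (n m : ℕ) (O : Fin m → Matrix (Fin n) (Fin n) ℂ)
    (hO : ∀ j, (O j).IsHermitian) (L : Matrix (Fin n) (Fin n) ℂ)
    (ψ : Fin n → ℂ) (hψ : inn ψ ψ = 1) (R P : Fin m → ℝ) (hR : ∀ j, 0 ≤ R j)
    (hz : ∀ j, inn ((O j).mulVec ψ) (L.mulVec ψ)
        - inn ψ (L.mulVec ψ) * inn ψ ((O j).mulVec ψ)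
      = (R j : ℂ) * Complex.exp (Complex.I * (P j))) :
    (∀ θ : ℝ,
        (1/2) * ∑ j, (R j) ^ 2
          - (1/2) * ‖(∑ j, ((R j : ℂ) ^ 2
              * Complex.exp (2 * Complex.I * (P j))))‖
        ≤ ∑ j, |(Complex.exp (Complex.I * θ)
            * (inn ((O j).mulVec ψ) (L.mulVec ψ)
              - inn ψ (L.mulVec ψ) * inn ψ ((O j).mulVec ψ))).re| ^ 2) ∧
      (∀ θ : ℝ,
        Complex.exp (2 * Complex.I * θ)
            * ∑ j, ((R j : ℂ) ^ 2 * Complex.exp (2 * Complex.I * (P j)))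
          = -((‖(∑ j, ((R j : ℂ) ^ 2
              * Complex.exp (2 * Complex.I * (P j))))‖ : ℝ) : ℂ) →
        ∑ j, |(Complex.exp (Complex.I * θ)
            * (inn ((O j).mulVec ψ) (L.mulVec ψ)
              - inn ψ (L.mulVec ψ) * inn ψ ((O j).mulVec ψ))).re| ^ 2
          = (1/2) * ∑ j, (R j) ^ 2
            - (1/2) * ‖(∑ j, ((R j : ℂ) ^ 2
                * Complex.exp (2 * Complex.I * (P j))))‖) := by
  set S : ℂ := ∑ j, ((R j : ℂ) ^ 2 * Complex.exp (2 * Complex.I * (P j))) with hS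
  have key : ∀ θ : ℝ,
      (∑ j, |(Complex.exp (Complex.I * θ)
            * (inn ((O j).mulVec ψ) (L.mulVec ψ)
              - inn ψ (L.mulVec ψ) * inn ψ ((O j).mulVec ψ))).re| ^ 2)
        = (1/2) * (∑ j, (R j) ^ 2) + (1/2) * (Complex.exp (2 * Complex.I * θ) * S).re := by
    intro θ
    have : ∀ j ∈ Finset.univ, |(Complex.exp (Complex.I * θ)
            * (inn ((O j).mulVec ψ) (L.mulVec ψ)
              - inn ψ (L.mulVec ψ) * inn ψ ((O j).mulVec ψ))).re| ^ 2
        = (1/2) * (R j) ^ 2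
          + (1/2) * (Complex.exp (2 * Complex.I * θ)
              * ((R j : ℂ) ^ 2 * Complex.exp (2 * Complex.I * (P j)))).re := by
      intro j _
      rw [hz j]
      exact pt19 θ (P j) (R j)
    rw [Finset.sum_congr rfl this, Finset.sum_add_distrib, ← Finset.mul_sum, hS]
    simp only [Finset.mul_sum, Complex.re_sum]
  constructor
  · intro θ
    rw [key θ]
    have h1 : -(‖S‖) ≤ (Complex.exp (2 * Complex.I * θ) * S).re := by
      have := (abs_le.1 (Complex.abs_re_le_norm (Complex.exp (2 * Complex.I * θ) * S))).1
      have habs : ‖Complex.exp (2 * Complex.I * θ) * S‖ = ‖S‖ := by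
        rw [norm_mul, Complex.norm_exp]
        have : (2 * Complex.I * (θ : ℂ)).re = 0 := by simp
        rw [this, Real.exp_zero, one_mul]
      rw [habs] at this; linarith
    nlinarith [h1]
  · intro θ hθ
    rw [key θ, hθ]
    simp
    ring
end
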